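/- Combinatorial geodesics project to geodesics (Lemma 'NR hp in Q'): Let a hierarchical family of trees be given, with 0-consistent set Q. Let x̂, ŷ ∈ Q, set n = d_Q(x̂, ŷ), and let x̂ = ẑ₀, ẑ₁, …, ẑ_n = ŷ be a combinatorial geodesic in Q, i.e. d_Q(ẑ_{i−1}, ẑ_i) = 1 for each 1 ≤ i ≤ n. Then for every U ∈ 𝒰, the sequence of vertices (ẑ₀)_U, (ẑ₁)_U, …, (ẑ_n)_U of T_U, after deleting consecutive repetitions, is exactly the vertex sequence of the geodesic in T_U from x̂_U to ŷ_U; in particular, the projection of the combinatorial geodesic to each T_U is an unparameterized geodesic. -/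

import Mathlib

/-- `a` and `b` lie in the same connected component of the tree `G` with the vertex `w`
deleted (equivalently: `a, b ≠ w` and `w` does not lie on the geodesic from `a` to `b`). -/
def treeSameComp {α : Type*} (G : SimpleGraph α) (w a b : α) : Prop :=
  a ≠ w ∧ b ≠ w ∧ G.dist a w + G.dist w b ≠ G.dist a b

/-- `m` is the median of `a`, `b`, `c` in the tree `G`: it lies on all three
pairwise geodesics. -/
def IsTreeMedian {α : Type*} (G : SimpleGraph α) (a b c m : α) : Prop :=
  G.dist a m + G.dist m b = G.dist a b ∧
  G.dist a m + G.dist m c = G.dist a c ∧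
  G.dist b m + G.dist m c = G.dist b c

/-- A hierarchical family of trees: a finite index set `Idx` of domains with relations
`⊏` (proper nesting) and `⊥` (orthogonality), a finite simplicial tree `G U` on the
finite vertex set `Vtx U` for each domain `U`, marked vertices labeled by the finite set
`F`, and relative projection data `δup`/`δdown` satisfying coherence, bounded geodesic
image, and consistency of the marked tuples. -/
structure HFT (Idx : Type*) [Fintype Idx] (Vtx : Idx → Type*) [∀ U, Fintype (Vtx U)]
    (F : Type*) [Fintype F] where
  /-- proper nesting `⊏` -/
  pnest : Idx → Idx → Prop
  /-- orthogonality `⊥` -/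
  orth : Idx → Idx → Prop
  pnest_irrefl : ∀ U, ¬ pnest U U
  pnest_trans : ∀ U V W, pnest U V → pnest V W → pnest U W
  /-- `⊏` has a unique maximal element -/
  max_unique : ∃! m : Idx, ∀ W, ¬ pnest m W
  orth_symm : ∀ U V, orth U V → orth V U
  orth_irrefl : ∀ U, ¬ orth U U
  orth_not_pnest : ∀ U V, orth U V → ¬ pnest U V
  /-- the tree associated to each domain -/
  G : (U : Idx) → SimpleGraph (Vtx U)
  tree : ∀ U, (G U).IsTree
  /-- the marked vertex of `T_U` labeled by `f : F` -/
  mark : (U : Idx) → F → Vtx U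
  /-- every leaf is marked -/
  leaf_marked : ∀ (U : Idx) (v : Vtx U),
    Set.Subsingleton {w : Vtx U | (G U).Adj v w} → ∃ f : F, mark U f = v
  /-- the relative projection vertex `δup V U = δ^V_U ∈ T_U`
  (relevant when `V ⊏ U` or `V ⋔ U`) -/
  δup : (V U : Idx) → Vtx U
  /-- the relative projection map `δdown U V = δ^U_V : T_U → T_V` (for `V ⊏ U`) -/
  δdown : (U V : Idx) → Vtx U → Vtx V
  /-- every component of `T_U − δ^V_U` contains a marked vertex -/
  comp_marked : ∀ V U : Idx,
    (pnest V U ∨ (V ≠ U ∧ ¬ pnest V U ∧ ¬ pnest U V ∧ ¬ orth V U)) →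
    ∀ a : Vtx U, a ≠ δup V U → ∃ f : F, treeSameComp (G U) (δup V U) a (mark U f)
  /-- `δ^U_W = δ^V_W` whenever `U ⊥ V`, `V ⊏ W`, and `U ⊏ W` or `U ⋔ W` -/
  δ_coherent : ∀ U V W : Idx, orth U V → pnest V W →
    (pnest U W ∨ (U ≠ W ∧ ¬ pnest U W ∧ ¬ pnest W U ∧ ¬ orth U W)) →
    δup U W = δup V W
  /-- bounded geodesic image: `δ^U_V` is constant on each component of `T_U − δ^V_U` … -/
  bgi_const : ∀ U V : Idx, pnest V U → ∀ a b : Vtx U,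
    treeSameComp (G U) (δup V U) a b → δdown U V a = δdown U V b
  /-- … with value `f̂_V` on the component containing `f̂_U` -/
  bgi_mark : ∀ U V : Idx, pnest V U → ∀ f : F,
    mark U f ≠ δup V U → δdown U V (mark U f) = mark V f
  /-- the marked tuples are 0-consistent (transverse case) -/
  mark_consistent_t : ∀ (f : F) (U V : Idx),
    (U ≠ V ∧ ¬ pnest U V ∧ ¬ pnest V U ∧ ¬ orth U V) →
    mark U f = δup V U ∨ mark V f = δup U V
  /-- the marked tuples are 0-consistent (nested case) -/
  mark_consistent_n : ∀ (f : F) (U V : Idx), pnest V U →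
    mark U f = δup V U ∨ mark V f = δdown U V (mark U f)

namespace HFT

variable {Idx : Type*} [Fintype Idx] {Vtx : Idx → Type*} [∀ U, Fintype (Vtx U)]
  {F : Type*} [Fintype F]

/-- Transversality `U ⋔ V`: distinct, not nested either way, not orthogonal. -/
def transv (H : HFT Idx Vtx F) (U V : Idx) : Prop :=
  U ≠ V ∧ ¬ H.pnest U V ∧ ¬ H.pnest V U ∧ ¬ H.orth U V

/-- A tuple of vertices is 0-consistent. -/
def ZeroConsistent (H : HFT Idx Vtx F) (x : ∀ U, Vtx U) : Prop :=
  (∀ U V, H.transv U V → x U = H.δup V U ∨ x V = H.δup U V) ∧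
  (∀ U V, H.pnest V U → x U = H.δup V U ∨ x V = H.δdown U V (x U))

/-- The set `Q` of all 0-consistent tuples. -/
def Q (H : HFT Idx Vtx F) : Set (∀ U, Vtx U) := {x | H.ZeroConsistent x}

/-- The ℓ¹ metric on tuples: `d_Q(x, y) = Σ_U d_{T_U}(x_U, y_U)`. -/
noncomputable def dQ (H : HFT Idx Vtx F) (x y : ∀ U, Vtx U) : ℕ :=
  ∑ U : Idx, (H.G U).dist (x U) (y U)

/-- The half-tree of the edge `{u, v}` of `T_U` on the `u`-side: the vertices strictly
closer to `u` than to `v`. -/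
def halfTree (H : HFT Idx Vtx F) (U : Idx) (u v : Vtx U) : Set (Vtx U) :=
  {w | (H.G U).dist w u < (H.G U).dist w v}

/-- The half-space of `Q` determined by the half-tree of `{u, v} ⊆ T_U` on the
`u`-side. -/
def halfSpace (H : HFT Idx Vtx F) (U : Idx) (u v : Vtx U) : Set (∀ W, Vtx W) :=
  {x | x ∈ H.Q ∧ x U ∈ H.halfTree U u v}

/-- Two walls (dual to the edge `{u, v}` of `T_U` and the edge `{u', v'}` of `T_V`)
cross: all four intersections of half-spaces are nonempty. -/
def Crosses (H : HFT Idx Vtx F) (U : Idx) (u v : Vtx U) (V : Idx) (u' v' : Vtx V) :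
    Prop :=
  (H.halfSpace U u v ∩ H.halfSpace V u' v').Nonempty ∧
  (H.halfSpace U u v ∩ H.halfSpace V v' u').Nonempty ∧
  (H.halfSpace U v u ∩ H.halfSpace V u' v').Nonempty ∧
  (H.halfSpace U v u ∩ H.halfSpace V v' u').Nonempty

/-- Two walls are transverse: none of the four inclusions among their half-spaces and
complements holds. -/
def WallTransverse (H : HFT Idx Vtx F) (U : Idx) (u v : Vtx U) (V : Idx)
    (u' v' : Vtx V) : Prop :=
  ¬ (H.halfSpace U u v ⊆ H.halfSpace V u' v') ∧
  ¬ (H.halfSpace U u v ⊆ H.halfSpace V v' u') ∧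
  ¬ (H.halfSpace U v u ⊆ H.halfSpace V u' v') ∧
  ¬ (H.halfSpace U v u ⊆ H.halfSpace V v' u')

end HFT

variable {Idx : Type*} [Fintype Idx] {Vtx : Idx → Type*} [∀ U, Fintype (Vtx U)]
  {F : Type*} [Fintype F]


open SimpleGraph Finset

private lemma tree_unique_on_geodesic {α : Type*} {G : SimpleGraph α} (hT : G.IsTree)
    {x y a b : α} (ha : G.dist x a + G.dist a y = G.dist x y)
    (hb : G.dist x b + G.dist b y = G.dist x y)
    (hd : G.dist x a = G.dist x b) : a = b := by
  obtain ⟨p, hp⟩ := hT.isConnected.exists_walk_length_eq_dist x a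
  obtain ⟨q, hq⟩ := hT.isConnected.exists_walk_length_eq_dist a y
  obtain ⟨p', hp'⟩ := hT.isConnected.exists_walk_length_eq_dist x b
  obtain ⟨q', hq'⟩ := hT.isConnected.exists_walk_length_eq_dist b y
  have hr : (p.append q).length = G.dist x y := by
    rw [Walk.length_append, hp, hq, ha]
  have hr' : (p'.append q').length = G.dist x y := by
    rw [Walk.length_append, hp', hq', hb]
  have hP := (p.append q).isPath_of_length_eq_dist hr
  have hP' := (p'.append q').isPath_of_length_eq_dist hr'
  have huniq := hT.IsAcyclic.path_unique ⟨p.append q, hP⟩ ⟨p'.append q', hP'⟩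
  have heq : p.append q = p'.append q' := congrArg Subtype.val huniq
  have h1 : (p.append q).getVert (G.dist x a) = a := by
    rw [← hp, Walk.getVert_append]; simp
  have h2 : (p'.append q').getVert (G.dist x b) = b := by
    rw [← hp', Walk.getVert_append]; simp
  rw [← h1, ← h2, heq, hd]

private lemma dist_chain_le {α : Type*} {G : SimpleGraph α} (hc : G.Connected)
    (f : ℕ → α) (a b : ℕ) (hab : a ≤ b) :
    G.dist (f a) (f b) ≤ ∑ i ∈ Finset.Ico a b, G.dist (f i) (f (i + 1)) := by
  induction b, hab using Nat.le_induction with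
  | base => simp
  | succ b hab ih =>
    rw [Finset.sum_Ico_succ_top (by omega)]
    exact le_trans (hc.dist_triangle (v := f b)) (by omega)

private lemma nat_ivt (f : ℕ → ℕ) (hstep : ∀ i, f (i + 1) ≤ f i + 1) :
    ∀ n k, f 0 ≤ k → k ≤ f n → ∃ i ≤ n, f i = k := by
  intro n
  induction n with
  | zero => exact fun k h1 h2 => ⟨0, le_refl 0, le_antisymm h1 h2⟩
  | succ n ih =>
    intro k h1 h2
    by_cases h : k ≤ f n
    · obtain ⟨i, hi, hfi⟩ := ih k h1 h
      exact ⟨i, by omega, hfi⟩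
    · exact ⟨n + 1, le_refl _, by have := hstep n; omega⟩
/-- **Combinatorial geodesics project to geodesics** (Lemma `NR hp in Q`): along a
combinatorial geodesic in `Q` from `x̂` to `ŷ`, in each tree `T_U` the coordinates stay
on the geodesic from `x̂_U` to `ŷ_U`, move monotonically along it by steps which are
trivial or along an edge, and visit every vertex of it; i.e. after deleting consecutive
repetitions the projected sequence is exactly the vertex sequence of that geodesic. -/
theorem combinatorial_geodesics_project (H : HFT Idx Vtx F)
    (x y : ∀ U, Vtx U) (hx : x ∈ H.Q) (hy : y ∈ H.Q)
    (n : ℕ) (hn : n = H.dQ x y)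
    (z : Fin (n + 1) → ∀ U, Vtx U)
    (hzQ : ∀ i, z i ∈ H.Q) (hz0 : z 0 = x) (hzl : z (Fin.last n) = y)
    (hstep : ∀ i : Fin n, H.dQ (z i.castSucc) (z i.succ) = 1) :
    ∀ U : Idx,
      -- every term lies on the geodesic from `x U` to `y U`
      (∀ i, (H.G U).dist (x U) (z i U) + (H.G U).dist (z i U) (y U) =
        (H.G U).dist (x U) (y U)) ∧
      -- the projected sequence moves monotonically away from `x U`
      (∀ i : Fin n,
        (H.G U).dist (x U) (z i.castSucc U) ≤ (H.G U).dist (x U) (z i.succ U)) ∧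
      -- consecutive terms are equal or adjacent
      (∀ i : Fin n, z i.castSucc U = z i.succ U ∨
        (H.G U).Adj (z i.castSucc U) (z i.succ U)) ∧
      -- every vertex of the geodesic from `x U` to `y U` occurs
      (∀ w : Vtx U,
        (H.G U).dist (x U) w + (H.G U).dist w (y U) = (H.G U).dist (x U) (y U) →
        ∃ i, z i U = w) := by
  classical
  set zz : ℕ → ∀ U, Vtx U := fun k => z ⟨min k n, by omega⟩ with hzzdef
  have hzzk : ∀ (k : ℕ) (h : k ≤ n), zz k = z ⟨k, by omega⟩ := by
    intro k h
    simp only [hzzdef]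
    have e : (⟨min k n, by omega⟩ : Fin (n + 1)) = ⟨k, by omega⟩ := by
      apply Fin.ext
      show min k n = k
      omega
    exact congrArg z e
  have hzi : ∀ i : Fin (n + 1), zz i.val = z i := by
    intro i
    rw [hzzk i.val (by omega)]
  have hx0 : zz 0 = x := by
    rw [hzzk 0 (Nat.zero_le n)]
    have h0 : (⟨0, by omega⟩ : Fin (n + 1)) = 0 := Fin.ext (by simp)
    rw [h0, hz0]
  have hyn : zz n = y := by
    rw [hzzk n le_rfl]
    have hl : (⟨n, by omega⟩ : Fin (n + 1)) = Fin.last n := Fin.ext (by simp)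
    rw [hl, hzl]
  have hclamp : ∀ i : ℕ, n ≤ i → zz (i + 1) = zz i := by
    intro i hi
    simp only [hzzdef]
    have e : (⟨min (i + 1) n, by omega⟩ : Fin (n + 1)) = ⟨min i n, by omega⟩ := by
      apply Fin.ext
      show min (i + 1) n = min i n
      omega
    exact congrArg z e
  have hstep' : ∀ i : ℕ, i < n →
      ∑ U : Idx, (H.G U).dist (zz i U) (zz (i + 1) U) = 1 := by
    intro i hi
    have h1 := hstep ⟨i, hi⟩
    unfold HFT.dQ at h1
    rw [hzzk i (le_of_lt hi), hzzk (i + 1) hi]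
    convert h1 using 3 <;> rfl
  have total : ∑ U : Idx, ∑ i ∈ Finset.range n,
      (H.G U).dist (zz i U) (zz (i + 1) U) = n := by
    rw [Finset.sum_comm]
    calc ∑ i ∈ Finset.range n, ∑ U : Idx, (H.G U).dist (zz i U) (zz (i + 1) U)
        = ∑ i ∈ Finset.range n, 1 :=
          Finset.sum_congr rfl (fun i hi => hstep' i (Finset.mem_range.mp hi))
      _ = n := by simp
  have lower : ∀ U : Idx, (H.G U).dist (x U) (y U) ≤
      ∑ i ∈ Finset.range n, (H.G U).dist (zz i U) (zz (i + 1) U) := by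
    intro U
    have h := dist_chain_le (H.tree U).isConnected (fun k => zz k U) 0 n (Nat.zero_le n)
    rw [congrFun hx0 U, congrFun hyn U, ← Finset.range_eq_Ico] at h
    exact h
  have hsum_xy : ∑ U : Idx, (H.G U).dist (x U) (y U) = n := by
    rw [hn]; rfl
  have perU : ∀ U : Idx, ∑ i ∈ Finset.range n,
      (H.G U).dist (zz i U) (zz (i + 1) U) = (H.G U).dist (x U) (y U) := by
    have h := (Finset.sum_eq_sum_iff_of_le (fun U _ => lower U)).mp
      (by rw [hsum_xy, total])
    exact fun U => (h U (Finset.mem_univ U)).symm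
  intro U
  have hc := (H.tree U).isConnected
  have key : ∀ i : ℕ, i ≤ n →
      (H.G U).dist (x U) (zz i U) = ∑ j ∈ Finset.range i,
        (H.G U).dist (zz j U) (zz (j + 1) U) ∧
      (H.G U).dist (x U) (zz i U) + (H.G U).dist (zz i U) (y U) =
        (H.G U).dist (x U) (y U) := by
    intro i hi
    have hA := dist_chain_le hc (fun k => zz k U) 0 i (Nat.zero_le i)
    rw [congrFun hx0 U, ← Finset.range_eq_Ico] at hA
    have hB := dist_chain_le hc (fun k => zz k U) i n hi
    rw [congrFun hyn U] at hB
    have hsplit : ∑ j ∈ Finset.range i, (H.G U).dist (zz j U) (zz (j + 1) U) +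
        ∑ j ∈ Finset.Ico i n, (H.G U).dist (zz j U) (zz (j + 1) U) =
        ∑ j ∈ Finset.range n, (H.G U).dist (zz j U) (zz (j + 1) U) := by
      simp only [Finset.range_eq_Ico]
      exact Finset.sum_Ico_consecutive _ (Nat.zero_le i) hi
    have htri : (H.G U).dist (x U) (y U) ≤
        (H.G U).dist (x U) (zz i U) + (H.G U).dist (zz i U) (y U) := hc.dist_triangle
    have hD := perU U
    constructor <;> omega
  have hdle : ∀ i : ℕ, i < n → (H.G U).dist (zz i U) (zz (i + 1) U) ≤ 1 := by
    intro i hi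
    calc (H.G U).dist (zz i U) (zz (i + 1) U)
        ≤ ∑ U' : Idx, (H.G U').dist (zz i U') (zz (i + 1) U') :=
          Finset.single_le_sum (f := fun U' : Idx => (H.G U').dist (zz i U') (zz (i + 1) U'))
            (fun _ _ => Nat.zero_le _) (Finset.mem_univ U)
      _ = 1 := hstep' i hi
  refine ⟨?_, ?_, ?_, ?_⟩
  · intro i
    have h := (key i.val (by omega)).2
    rwa [congrFun (hzi i) U] at h
  · intro i
    have h1 := (key i.val (by omega)).1
    have h2 := (key (i.val + 1) (by omega)).1
    rw [Finset.sum_range_succ] at h2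
    have e1 : zz i.val U = z i.castSucc U := congrFun (hzi i.castSucc) U
    have e2 : zz (i.val + 1) U = z i.succ U := congrFun (hzi i.succ) U
    rw [e1] at h1
    rw [e2] at h2
    omega
  · intro i
    have e1 : zz i.val U = z i.castSucc U := congrFun (hzi i.castSucc) U
    have e2 : zz (i.val + 1) U = z i.succ U := congrFun (hzi i.succ) U
    have hle := hdle i.val i.isLt
    rcases Nat.le_one_iff_eq_zero_or_eq_one.mp hle with h | h
    · left
      rw [← e1, ← e2]
      exact hc.dist_eq_zero_iff.mp h
    · right
      rw [← e1, ← e2]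
      exact SimpleGraph.dist_eq_one_iff_adj.mp h
  · intro w hw
    have hkD : (H.G U).dist (x U) w ≤ (H.G U).dist (x U) (y U) := by omega
    have hstepf : ∀ i : ℕ,
        (H.G U).dist (x U) (zz (i + 1) U) ≤ (H.G U).dist (x U) (zz i U) + 1 := by
      intro i
      by_cases hi : i < n
      · have h1 := (key i (le_of_lt hi)).1
        have h2 := (key (i + 1) hi).1
        rw [Finset.sum_range_succ] at h2
        have := hdle i hi
        omega
      · rw [hclamp i (by omega)]
        omega
    have hf0 : (H.G U).dist (x U) (zz 0 U) = 0 := by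
      rw [congrFun hx0 U, SimpleGraph.dist_self]
    have hfn : (H.G U).dist (x U) (zz n U) = (H.G U).dist (x U) (y U) := by
      rw [congrFun hyn U]
    obtain ⟨i, hi, hfi⟩ := nat_ivt (fun i => (H.G U).dist (x U) (zz i U)) hstepf n
      ((H.G U).dist (x U) w)
      (by show (H.G U).dist (x U) (zz 0 U) ≤ _; omega)
      (by show _ ≤ (H.G U).dist (x U) (zz n U); omega)
    have hgeo := (key i hi).2
    have heq := tree_unique_on_geodesic (H.tree U) hgeo hw hfi
    refine ⟨⟨i, by omega⟩, ?_⟩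
    rw [← congrFun (hzi ⟨i, by omega⟩) U]
    exact heq
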